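/- Let 𝒢 be a family of connected non-trivial graphs on a common vertex set V. Let P_n be a path graph of order n ≥ 7 with n ≢ 1 (mod 5) and n ≢ 3 (mod 5), and let C_n be the cycle graph obtained from P_n by joining its two leaves by an edge. Let B be an adjacency basis of both P_n and C_n which is also a dominating set of both. Then for every family ℋ ⊆ 𝒢_B(P_n) ∪ 𝒢_B(C_n) such that P_n ∈ ℋ or C_n ∈ ℋ, Sd_A(𝒢⊙ℋ) = |V| · ⌊(2n+2)/5⌋. -/

import Mathlib

open SimpleGraph

/-- `S` is a metric generator for `G`: every pair of distinct vertices is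
distinguished by some element of `S` via the shortest-path distance. -/
def IsMetricGen {V : Type*} (G : SimpleGraph V) (S : Set V) : Prop :=
  ∀ u v : V, u ≠ v → ∃ s ∈ S, G.dist s u ≠ G.dist s v

/-- `S` is an adjacency generator for `G`. -/
def IsAdjGen {V : Type*} (G : SimpleGraph V) (S : Set V) : Prop :=
  ∀ x y : V, x ∉ S → y ∉ S → x ≠ y → ∃ s ∈ S, Xor' (G.Adj s x) (G.Adj s y)

/-- `S` is a simultaneous metric generator for the family `𝒢`. -/
def IsSimMetricGen {V : Type*} (𝒢 : Set (SimpleGraph V)) (S : Set V) : Prop :=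
  ∀ G ∈ 𝒢, IsMetricGen G S

/-- `S` is a simultaneous adjacency generator for the family `ℋ`. -/
def IsSimAdjGen {V : Type*} (ℋ : Set (SimpleGraph V)) (S : Set V) : Prop :=
  ∀ H ∈ ℋ, IsAdjGen H S

/-- The simultaneous metric dimension of a family of graphs. -/
noncomputable def Sd {V : Type*} (𝒢 : Set (SimpleGraph V)) : ℕ :=
  sInf {n | ∃ S : Set V, S.ncard = n ∧ IsSimMetricGen 𝒢 S}

/-- The simultaneous adjacency dimension of a family of graphs. -/
noncomputable def SdA {V : Type*} (ℋ : Set (SimpleGraph V)) : ℕ :=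
  sInf {n | ∃ S : Set V, S.ncard = n ∧ IsSimAdjGen ℋ S}

/-- The adjacency dimension of a graph. -/
noncomputable def adjDim {V : Type*} (G : SimpleGraph V) : ℕ := SdA {G}

/-- `B` is an adjacency basis of `G`. -/
def IsAdjBasis {V : Type*} (G : SimpleGraph V) (B : Set V) : Prop :=
  IsAdjGen G B ∧ B.ncard = adjDim G

/-- `B` is a simultaneous adjacency basis of the family `ℋ`. -/
def IsSimAdjBasis {V : Type*} (ℋ : Set (SimpleGraph V)) (B : Set V) : Prop :=
  IsSimAdjGen ℋ B ∧ B.ncard = SdA ℋ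

/-- `D` is a dominating set of `G`. -/
def IsDomSet {V : Type*} (G : SimpleGraph V) (D : Set V) : Prop :=
  ∀ v ∉ D, ∃ u ∈ D, G.Adj u v

/-- `D` is a simultaneous dominating set of the family `𝒢`. -/
def IsSimDomSet {V : Type*} (𝒢 : Set (SimpleGraph V)) (D : Set V) : Prop :=
  ∀ G ∈ 𝒢, IsDomSet G D

/-- The simultaneous domination number of a family of graphs. -/
noncomputable def Sgamma {V : Type*} (𝒢 : Set (SimpleGraph V)) : ℕ :=
  sInf {n | ∃ D : Set V, D.ncard = n ∧ IsSimDomSet 𝒢 D}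

/-- The domination number of a graph. -/
noncomputable def domNum {V : Type*} (G : SimpleGraph V) : ℕ := Sgamma {G}

/-- `γ'(G) = min over vertices `v` of `γ(G - v)`. -/
noncomputable def gammaPrime {V : Type*} (G : SimpleGraph V) : ℕ :=
  sInf {n | ∃ v : V, n = domNum (G.induce {v}ᶜ)}

/-- The corona product `G ⊙ H`: one copy of `G` together with a copy of `H`
for each vertex `i` of `G`, joining `i` to every vertex of its copy. -/
def corona {V V' : Type*} (G : SimpleGraph V) (H : SimpleGraph V') :
    SimpleGraph (V ⊕ V × V') where
  Adj x y :=
    match x, y with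
    | Sum.inl i, Sum.inl j => G.Adj i j
    | Sum.inl i, Sum.inr p => i = p.1
    | Sum.inr p, Sum.inl j => p.1 = j
    | Sum.inr p, Sum.inr q => p.1 = q.1 ∧ H.Adj p.2 q.2
  symm := ⟨by
    rintro (i | p) (j | q) h
    · exact G.adj_symm h
    · exact h.symm
    · exact h.symm
    · exact ⟨h.1.symm, H.adj_symm h.2⟩⟩
  loopless := ⟨by
    rintro (i | p) h
    · exact G.loopless.irrefl i h
    · exact H.loopless.irrefl p.2 h.2⟩

/-- The family `{G ⊙ H : G ∈ 𝒢, H ∈ ℋ}` of corona products. -/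
def coronaFam {V V' : Type*} (𝒢 : Set (SimpleGraph V)) (ℋ : Set (SimpleGraph V')) :
    Set (SimpleGraph (V ⊕ V × V')) :=
  {K | ∃ G ∈ 𝒢, ∃ H ∈ ℋ, K = corona G H}

/-- The join `G + H` of two (vertex-disjoint) graphs. -/
def joinG {V₁ V₂ : Type*} (G : SimpleGraph V₁) (H : SimpleGraph V₂) :
    SimpleGraph (V₁ ⊕ V₂) where
  Adj x y :=
    match x, y with
    | Sum.inl a, Sum.inl b => G.Adj a b
    | Sum.inl _, Sum.inr _ => True
    | Sum.inr _, Sum.inl _ => True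
    | Sum.inr a, Sum.inr b => H.Adj a b
  symm := ⟨by
    rintro (a | a) (b | b) h
    · exact G.adj_symm h
    · trivial
    · trivial
    · exact H.adj_symm h⟩
  loopless := ⟨by
    rintro (a | a) h
    · exact G.loopless.irrefl a h
    · exact H.loopless.irrefl a h⟩

/-- The family `{G + H : G ∈ 𝒢, H ∈ ℋ}` of joins. -/
def joinFam {V₁ V₂ : Type*} (𝒢 : Set (SimpleGraph V₁)) (ℋ : Set (SimpleGraph V₂)) :
    Set (SimpleGraph (V₁ ⊕ V₂)) :=
  {K | ∃ G ∈ 𝒢, ∃ H ∈ ℋ, K = joinG G H}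

/-- The family `𝒢_B(G)`: all graphs `G'` such that, for some permutation `f` of the
vertex set fixing `B` pointwise, `N_{G'}(x) = f(N_G(x))` for every `x ∈ B`. -/
def GBfam {V : Type*} (G : SimpleGraph V) (B : Set V) : Set (SimpleGraph V) :=
  {G' | ∃ f : Equiv.Perm V, (∀ x ∈ B, f x = x) ∧
    ∀ x ∈ B, G'.neighborSet x = f '' (G.neighborSet x)}

/-! ### Auxiliary lemmas -/

open Finset
open scoped Classical

section PathDim

lemma aux_range_filter_card (n : ℕ) :
    ((Finset.range n).filter (fun k => k % 5 = 1 ∨ k % 5 = 3)).card = (2*n+2)/5 := by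
  induction n with
  | zero => simp
  | succ n ih =>
    rw [Finset.range_add_one, Finset.filter_insert]
    by_cases h : n % 5 = 1 ∨ n % 5 = 3
    · rw [if_pos h, Finset.card_insert_of_notMem (by simp)]
      omega
    · rw [if_neg h]; omega

/-- The canonical adjacency basis of the path graph. -/
def auxPB (n : ℕ) : Finset (Fin n) :=
  Finset.univ.filter (fun k => k.val % 5 = 1 ∨ k.val % 5 = 3)

lemma auxPB_card (n : ℕ) : (auxPB n).card = (2*n+2)/5 := by
  rw [← aux_range_filter_card n]
  apply Finset.card_bij (fun a _ => a.val)
  · intro a ha; simp [auxPB] at ha ⊢; omega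
  · intro a _ b _ h; exact Fin.val_injective h
  · intro k hk; simp at hk; exact ⟨⟨k, hk.1⟩, by simp [auxPB]; omega, rfl⟩

set_option maxHeartbeats 2000000 in
lemma auxPB_gen {n : ℕ} (h3 : n % 5 ≠ 3) :
    IsAdjGen (pathGraph n) (↑(auxPB n) : Set (Fin n)) := by
  intro x y hx hy hxy
  by_contra hc
  push_neg at hc
  have H : ∀ s : ℕ, s < n → (s % 5 = 1 ∨ s % 5 = 3) →
      ((s + 1 = x.val ∨ x.val + 1 = s) ↔ (s + 1 = y.val ∨ y.val + 1 = s)) := by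
    intro s hs hm
    have h := hc ⟨s, hs⟩ (by simp [auxPB, hm])
    simp only [Xor', Xor, pathGraph_adj] at h ⊢
    tauto
  have hx' : ¬(x.val % 5 = 1 ∨ x.val % 5 = 3) := by simpa [auxPB] using hx
  have hy' : ¬(y.val % 5 = 1 ∨ y.val % 5 = 3) := by simpa [auxPB] using hy
  have hxy' : x.val ≠ y.val := fun h => hxy (Fin.val_injective h)
  have h1 := H (x.val+1); have h2 := H (x.val-1)
  have h3' := H (y.val+1); have h4 := H (y.val-1)
  have hxn := x.isLt; have hyn := y.isLt
  omega

lemma aux_path_deg_le {n : ℕ} (v : Fin n) :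
    (Finset.univ.filter (fun s => (pathGraph n).Adj s v)).card ≤ 2 := by
  have h : (Finset.univ.filter (fun s => (pathGraph n).Adj s v)).card
      ≤ ({v.val + 1, v.val - 1} : Finset ℕ).card := by
    apply Finset.card_le_card_of_injOn Fin.val
    · intro s hs
      simp only [Finset.mem_filter, pathGraph_adj] at hs
      simp only [Finset.mem_coe, Finset.mem_filter, Finset.mem_univ, true_and, Finset.mem_insert, Finset.mem_singleton] at hs ⊢
      omega
    · exact fun a _ b _ h => Fin.val_injective h
  refine h.trans ?_
  refine (Finset.card_insert_le _ _).trans ?_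
  simp

lemma aux_path_gen_lower {n : ℕ} (S : Set (Fin n)) (hS : IsAdjGen (pathGraph n) S) :
    (2*n+2)/5 ≤ S.ncard := by
  classical
  set G := pathGraph n with hG
  set F : Finset (Fin n) := S.toFinset with hFdef
  have hF : S.ncard = F.card := Set.ncard_eq_toFinset_card' S
  set T : Finset (Fin n) := Fᶜ with hT
  set p : Fin n → ℕ := fun x => (F.filter (fun s => G.Adj s x)).card with hp
  have hmemT : ∀ x ∈ T, x ∉ S := by
    intro x hx; rw [hT, Finset.mem_compl] at hx; simpa [hFdef, Set.mem_toFinset] using hx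
  have key : ∀ x ∈ T, ∀ y ∈ T,
      F.filter (fun s => G.Adj s x) = F.filter (fun s => G.Adj s y) → x = y := by
    intro x hx y hy hpr
    by_contra hne
    obtain ⟨s, hsS, hxor⟩ := hS x y (hmemT x hx) (hmemT y hy) hne
    have hsF : s ∈ F := by simpa [hFdef, Set.mem_toFinset] using hsS
    have : G.Adj s x ↔ G.Adj s y := by
      constructor
      · intro h; have : s ∈ F.filter (fun s => G.Adj s x) := Finset.mem_filter.mpr ⟨hsF, h⟩
        rw [hpr] at this; exact (Finset.mem_filter.mp this).2
      · intro h; have : s ∈ F.filter (fun s => G.Adj s y) := Finset.mem_filter.mpr ⟨hsF, h⟩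
        rw [← hpr] at this; exact (Finset.mem_filter.mp this).2
    exact (xor_iff_not_iff _ _).mp hxor this
  have hp2 : ∀ x, p x ≤ 2 := by
    intro x
    exact le_trans (Finset.card_le_card
      (Finset.filter_subset_filter _ (Finset.subset_univ F))) (aux_path_deg_le x)
  set T0 := T.filter (fun x => p x = 0) with hT0
  set T1 := T.filter (fun x => p x = 1) with hT1
  set T2 := T.filter (fun x => p x = 2) with hT2
  have hc : T0.card ≤ 1 := by
    rw [Finset.card_le_one]
    intro a ha b hb
    rw [hT0, Finset.mem_filter] at ha hb
    exact key a ha.1 b hb.1 (by rw [Finset.card_eq_zero.mp ha.2, Finset.card_eq_zero.mp hb.2])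
  have hb : T1.card ≤ F.card := by
    have h1 : T1.card ≤ (F.image (fun s => ({s} : Finset (Fin n)))).card := by
      apply Finset.card_le_card_of_injOn (fun x => F.filter (fun s => G.Adj s x))
      · intro x hx
        rw [hT1, Finset.mem_coe, Finset.mem_filter] at hx
        obtain ⟨s, hs⟩ := Finset.card_eq_one.mp hx.2
        have hsF : s ∈ F := by
          have : s ∈ F.filter (fun t => G.Adj t x) := hs ▸ Finset.mem_singleton_self s
          exact (Finset.mem_filter.mp this).1
        exact Finset.mem_image.mpr ⟨s, hsF, hs.symm⟩
      · intro a ha b hb h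
        rw [Finset.mem_coe, hT1, Finset.mem_filter] at ha hb
        exact key a ha.1 b hb.1 h
    exact h1.trans Finset.card_image_le
  have hsum : ∑ x ∈ T, p x ≤ 2 * F.card := by
    have e1 : ∑ x ∈ T, p x ≤ ∑ x ∈ (Finset.univ : Finset (Fin n)), p x :=
      Finset.sum_le_sum_of_subset (Finset.subset_univ T)
    have e2 : ∑ x ∈ (Finset.univ : Finset (Fin n)), p x
        = ∑ s ∈ F, (Finset.univ.filter (fun x => G.Adj s x)).card := by
      simp only [hp, Finset.card_filter]
      rw [Finset.sum_comm]
    have e3 : ∑ s ∈ F, (Finset.univ.filter (fun x => G.Adj s x)).card ≤ ∑ s ∈ F, 2 := by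
      apply Finset.sum_le_sum
      intro s _
      have h := aux_path_deg_le (n := n) s
      have heq : (Finset.univ.filter (fun x => G.Adj s x))
          = (Finset.univ.filter (fun x => G.Adj x s)) := by
        apply Finset.filter_congr; intro x _; simp [G.adj_comm]
      rw [heq]; exact h
    calc ∑ x ∈ T, p x ≤ _ := e1
      _ = _ := e2
      _ ≤ ∑ s ∈ F, 2 := e3
      _ = 2 * F.card := by rw [Finset.sum_const, smul_eq_mul, mul_comm]
  have hTsplit : T.card ≤ T0.card + T1.card + T2.card := by
    have hsub : T ⊆ T0 ∪ T1 ∪ T2 := by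
      intro x hx
      have := hp2 x
      simp only [hT0, hT1, hT2, Finset.mem_union, Finset.mem_filter]
      rcases Nat.lt_or_ge (p x) 1 with h | h
      · left; left; exact ⟨hx, by omega⟩
      · rcases Nat.lt_or_ge (p x) 2 with h' | h'
        · left; right; exact ⟨hx, by omega⟩
        · right; exact ⟨hx, by omega⟩
    calc T.card ≤ (T0 ∪ T1 ∪ T2).card := Finset.card_le_card hsub
      _ ≤ (T0 ∪ T1).card + T2.card := Finset.card_union_le _ _
      _ ≤ T0.card + T1.card + T2.card := by
          have := Finset.card_union_le T0 T1; omega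
  have hab : 2 * T2.card + T1.card ≤ ∑ x ∈ T, p x := by
    have hdisj : Disjoint T1 T2 := by
      rw [Finset.disjoint_filter]
      intro x _ h1 h2; omega
    have hsub : T1 ∪ T2 ⊆ T := by
      rw [Finset.union_subset_iff]
      exact ⟨Finset.filter_subset _ _, Finset.filter_subset _ _⟩
    have e1 : ∑ x ∈ T1 ∪ T2, p x ≤ ∑ x ∈ T, p x :=
      Finset.sum_le_sum_of_subset hsub
    rw [Finset.sum_union hdisj] at e1
    have e2 : ∑ x ∈ T1, p x = T1.card := by
      rw [Finset.sum_congr rfl (fun x hx => (Finset.mem_filter.mp hx).2)]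
      simp [mul_comm, hT1]
    have e3 : ∑ x ∈ T2, p x = 2 * T2.card := by
      rw [Finset.sum_congr rfl (fun x hx => (Finset.mem_filter.mp hx).2)]
      simp [mul_comm, hT2]
    omega
  have hcardT : F.card + T.card = n := by
    rw [hT, Finset.card_compl]
    have := Finset.card_le_univ F
    simp only [Fintype.card_fin] at *
    omega
  rw [hF]
  omega

lemma aux_adjDim_path {n : ℕ} (h3 : n % 5 ≠ 3) : adjDim (pathGraph n) = (2*n+2)/5 := by
  have hgen : IsSimAdjGen {pathGraph n} (↑(auxPB n) : Set (Fin n)) := by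
    intro H hH
    rw [Set.mem_singleton_iff] at hH
    subst hH
    exact auxPB_gen h3
  apply le_antisymm
  · apply Nat.sInf_le
    exact ⟨(↑(auxPB n) : Set (Fin n)), by rw [Set.ncard_coe_finset, auxPB_card], hgen⟩
  · refine le_csInf ⟨_, (↑(auxPB n) : Set (Fin n)), rfl, hgen⟩ ?_
    rintro k ⟨S, rfl, hgenS⟩
    exact aux_path_gen_lower S (hgenS _ rfl)

end PathDim

section Cyc
variable {n : ℕ}

lemma aux_cn_adj (hn : 7 ≤ n) {Pn Cn : SimpleGraph (Fin n)} (hPn : Pn = SimpleGraph.pathGraph n)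
    (hCn : Cn = Pn ⊔ SimpleGraph.fromEdgeSet
      {s((⟨0, Nat.lt_of_lt_of_le (by norm_num) hn⟩ : Fin n), (⟨n - 1, Nat.sub_lt (Nat.lt_of_lt_of_le (by norm_num) hn) Nat.one_pos⟩ : Fin n))})
    (s v : Fin n) :
    Cn.Adj s v ↔ (s.val + 1 = v.val ∨ v.val + 1 = s.val ∨
      (s.val = 0 ∧ v.val = n - 1) ∨ (s.val = n - 1 ∧ v.val = 0)) := by
  subst hCn hPn
  rw [SimpleGraph.sup_adj, SimpleGraph.fromEdgeSet_adj, pathGraph_adj]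
  rw [Set.mem_singleton_iff, Sym2.eq_iff]
  simp only [Fin.ext_iff, ne_eq]
  constructor
  · rintro (h | ⟨(⟨h1, h2⟩ | ⟨h1, h2⟩), h3⟩) <;> omega
  · intro h
    have hv := v.isLt; have hs := s.isLt
    rcases h with h | h | ⟨h1, h2⟩ | ⟨h1, h2⟩
    · left; omega
    · left; omega
    · right; constructor; · left; exact ⟨h1, h2⟩
      · omega
    · right; constructor; · right; exact ⟨h1, h2⟩
      · omega

lemma aux_cn_deg_le (hn : 7 ≤ n) {Pn Cn : SimpleGraph (Fin n)}
    (hPn : Pn = SimpleGraph.pathGraph n)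
    (hCn : Cn = Pn ⊔ SimpleGraph.fromEdgeSet
      {s((⟨0, Nat.lt_of_lt_of_le (by norm_num) hn⟩ : Fin n), (⟨n - 1, Nat.sub_lt (Nat.lt_of_lt_of_le (by norm_num) hn) Nat.one_pos⟩ : Fin n))})
    (v : Fin n) :
    (Finset.univ.filter (fun s => Cn.Adj s v)).card ≤ 2 := by
  have h : (Finset.univ.filter (fun s => Cn.Adj s v)).card
      ≤ ((if v.val = 0 then {1, n-1} else if v.val = n - 1 then {n-2, 0}
          else {v.val + 1, v.val - 1}) : Finset ℕ).card := by
    apply Finset.card_le_card_of_injOn Fin.val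
    · intro s hs
      rw [Finset.mem_coe, Finset.mem_filter] at hs
      rw [aux_cn_adj hn hPn hCn] at hs
      have hv := v.isLt; have hs' := s.isLt
      split_ifs with h1 h2 <;> simp only [Finset.mem_coe, Finset.mem_insert, Finset.mem_singleton] <;> omega
    · exact fun a _ b _ h => Fin.val_injective h
  refine h.trans ?_
  split_ifs <;> refine (Finset.card_insert_le _ _).trans ?_ <;> simp

end Cyc

section GB
variable {n : ℕ} {G H : SimpleGraph (Fin n)} {B : Set (Fin n)}

lemma aux_gb_adj_iff (hH : H ∈ GBfam G B) :
    ∃ f : Equiv.Perm (Fin n), (∀ x ∈ B, f x = x) ∧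
      (∀ b ∈ B, ∀ v, H.Adj b v ↔ G.Adj b (f.symm v)) := by
  obtain ⟨f, hf, hN⟩ := hH
  refine ⟨f, hf, fun b hb v => ?_⟩
  have hNb := hN b hb
  constructor
  · intro h
    have hv : v ∈ H.neighborSet b := h
    rw [hNb] at hv
    obtain ⟨u, hu, huv⟩ := hv
    have : f.symm v = u := by rw [← huv]; simp
    rw [this]; exact hu
  · intro h
    have : v ∈ f '' (G.neighborSet b) := ⟨f.symm v, h, by simp⟩
    rw [← hN b hb] at this
    exact this

lemma aux_gb_fix_mem {f : Equiv.Perm (Fin n)}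
    (hf : ∀ x ∈ B, f x = x) {v : Fin n} (hv : v ∉ B) : f.symm v ∉ B := by
  intro hmem
  have := hf _ hmem
  rw [Equiv.apply_symm_apply] at this
  rw [← this] at hmem; exact hv hmem

lemma aux_gb_gen (hH : H ∈ GBfam G B) (hgen : IsAdjGen G B) : IsAdjGen H B := by
  obtain ⟨f, hf, hadj⟩ := aux_gb_adj_iff hH
  intro x y hx hy hxy
  obtain ⟨b, hb, hxor⟩ := hgen (f.symm x) (f.symm y) (aux_gb_fix_mem hf hx)
    (aux_gb_fix_mem hf hy) (fun h => hxy (f.symm.injective h))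
  exact ⟨b, hb, by rwa [← hadj b hb x, ← hadj b hb y] at hxor⟩

lemma aux_gb_dom (hH : H ∈ GBfam G B) (hdom : IsDomSet G B) : IsDomSet H B := by
  obtain ⟨f, hf, hadj⟩ := aux_gb_adj_iff hH
  intro v hv
  obtain ⟨b, hb, hb2⟩ := hdom (f.symm v) (aux_gb_fix_mem hf hv)
  exact ⟨b, hb, (hadj b hb v).mpr hb2⟩

lemma aux_gb_nonadj (hH : H ∈ GBfam G B)
    (hdeg : ∀ v, (Finset.univ.filter (fun s => G.Adj s v)).card ≤ 2)
    (hB : 3 ≤ B.ncard) (v : Fin n) : ∃ b ∈ B, ¬ H.Adj b v := by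
  obtain ⟨f, hf, hadj⟩ := aux_gb_adj_iff hH
  by_contra hc
  push_neg at hc
  have hsub : B.toFinset ⊆ Finset.univ.filter (fun s => G.Adj s (f.symm v)) := by
    intro b hb
    rw [Set.mem_toFinset] at hb
    rw [Finset.mem_filter]
    exact ⟨Finset.mem_univ _, (hadj b hb v).mp (hc b hb)⟩
  have h1 := Finset.card_le_card hsub
  rw [← Set.ncard_eq_toFinset_card' B] at h1
  have h2 := hdeg (f.symm v)
  omega

end GB

section Corona
variable {V V' : Type*} {G : SimpleGraph V} {H : SimpleGraph V'}

lemma corona_adj_inl_inl {i j : V} :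
    (corona G H).Adj (Sum.inl i) (Sum.inl j) ↔ G.Adj i j := Iff.rfl
lemma corona_adj_inl_inr {i : V} {p : V × V'} :
    (corona G H).Adj (Sum.inl i) (Sum.inr p) ↔ i = p.1 := Iff.rfl
lemma corona_adj_inr_inl {p : V × V'} {j : V} :
    (corona G H).Adj (Sum.inr p) (Sum.inl j) ↔ p.1 = j := Iff.rfl
lemma corona_adj_inr_inr {p q : V × V'} :
    (corona G H).Adj (Sum.inr p) (Sum.inr q) ↔ p.1 = q.1 ∧ H.Adj p.2 q.2 := Iff.rfl

lemma aux_fiber_sum_le [Fintype V] [Fintype V'] (S : Set (V ⊕ V × V')) :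
    ∑ i ∈ (Finset.univ : Finset V),
      (Finset.univ.filter (fun w : V' => Sum.inr (i, w) ∈ S)).card ≤ S.ncard := by
  classical
  set P : Finset (V × V') := Finset.univ.filter (fun p => Sum.inr p ∈ S) with hP
  have e1 : P.card = ∑ i ∈ (Finset.univ : Finset V), (P.filter (fun p => p.1 = i)).card :=
    Finset.card_eq_sum_card_fiberwise (fun p _ => Finset.mem_univ p.1)
  have e2 : ∀ i : V, (P.filter (fun p => p.1 = i)).card
      = (Finset.univ.filter (fun w : V' => Sum.inr (i, w) ∈ S)).card := by
    intro i
    apply Finset.card_bij (fun p _ => p.2)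
    · intro p hp
      simp only [hP, Finset.mem_filter, Finset.mem_univ, true_and] at hp ⊢
      rcases hp with ⟨h1, h2⟩
      rw [← h2] at *
      simpa using h1
    · intro a ha b hb hab
      simp only [hP, Finset.mem_filter] at ha hb
      ext
      · rw [ha.2, hb.2]
      · exact hab
    · intro w hw
      simp only [Finset.mem_filter, Finset.mem_univ, true_and] at hw
      refine ⟨(i, w), ?_, rfl⟩
      simp [hP, hw]
  have e3 : P.card ≤ S.ncard := by
    rw [Set.ncard_eq_toFinset_card' S]
    apply Finset.card_le_card_of_injOn Sum.inr
    · intro p hp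
      simp only [hP, Finset.mem_coe, Finset.mem_filter] at hp
      simp [Set.mem_toFinset, hp.2]
    · exact fun a _ b _ h => Sum.inr_injective h
  calc ∑ i ∈ (Finset.univ : Finset V),
        (Finset.univ.filter (fun w : V' => Sum.inr (i, w) ∈ S)).card
      = ∑ i ∈ (Finset.univ : Finset V), (P.filter (fun p => p.1 = i)).card := by
        apply Finset.sum_congr rfl; intro i _; rw [e2]
    _ = P.card := e1.symm
    _ ≤ S.ncard := e3

end Corona

theorem statement_6 {V : Type*} [Fintype V] [Nontrivial V]
    (𝒢 : Set (SimpleGraph V)) (h𝒢ne : 𝒢.Nonempty) (h𝒢 : ∀ G ∈ 𝒢, G.Connected)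
    (n : ℕ) (hn : 7 ≤ n) (h1 : n % 5 ≠ 1) (h3 : n % 5 ≠ 3)
    (Pn Cn : SimpleGraph (Fin n))
    (hPn : Pn = SimpleGraph.pathGraph n)
    (hCn : Cn = Pn ⊔ SimpleGraph.fromEdgeSet {s((⟨0, by omega⟩ : Fin n), (⟨n - 1, by omega⟩ : Fin n))})
    (B : Set (Fin n))
    (hBP : IsAdjBasis Pn B) (hBC : IsAdjBasis Cn B)
    (hDP : IsDomSet Pn B) (hDC : IsDomSet Cn B)
    (ℋ : Set (SimpleGraph (Fin n))) (hsub : ℋ ⊆ GBfam Pn B ∪ GBfam Cn B)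
    (hmem : Pn ∈ ℋ ∨ Cn ∈ ℋ) :
    SdA (coronaFam 𝒢 ℋ) = Fintype.card V * ((2 * n + 2) / 5) := by
  classical
  subst hPn
  set m := (2*n+2)/5 with hm
  have hdimP : adjDim (pathGraph n) = m := aux_adjDim_path h3
  have hBcard : B.ncard = m := by rw [hBP.2, hdimP]
  have hdimC : adjDim Cn = m := by rw [← hBC.2, hBcard]
  have hB3 : 3 ≤ B.ncard := by rw [hBcard]; omega
  have hBne : B.Nonempty := by
    rcases Set.eq_empty_or_nonempty B with h | h
    · exfalso; rw [h, Set.ncard_empty] at hB3; omega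
    · exact h
  -- the simultaneous generator for the upper bound
  set W : Set (V ⊕ V × Fin n) := Sum.inr '' {p : V × Fin n | p.2 ∈ B} with hW
  have hWcard : W.ncard = Fintype.card V * m := by
    have hWfin : W = ((((Finset.univ ×ˢ B.toFinset).image Sum.inr :
        Finset (V ⊕ V × Fin n))) : Set (V ⊕ V × Fin n)) := by
      ext z
      simp [hW, Set.mem_image, Finset.mem_coe, Finset.mem_image, Finset.mem_product,
        Set.mem_toFinset]
    rw [hWfin, Set.ncard_coe_finset, Finset.card_image_of_injective _ Sum.inr_injective,
      Finset.card_product, Finset.card_univ, ← Set.ncard_eq_toFinset_card' B, hBcard]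
  have hWgen : IsSimAdjGen (coronaFam 𝒢 ℋ) W := by
    rintro K ⟨G, hG, H, hH, rfl⟩
    have hHgen : IsAdjGen H B := by
      rcases hsub hH with h | h
      · exact aux_gb_gen h hBP.1
      · exact aux_gb_gen h hBC.1
    have hHdom : IsDomSet H B := by
      rcases hsub hH with h | h
      · exact aux_gb_dom h hDP
      · exact aux_gb_dom h hDC
    have hHnon : ∀ v : Fin n, ∃ b ∈ B, ¬ H.Adj b v := by
      rcases hsub hH with h | h
      · exact aux_gb_nonadj h (fun v => aux_path_deg_le v) hB3
      · exact aux_gb_nonadj h (aux_cn_deg_le hn rfl hCn) hB3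
    intro x y hx hy hxy
    have hmemW : ∀ (i : V) (b : Fin n), b ∈ B → Sum.inr (i, b) ∈ W :=
      fun i b hb => ⟨(i, b), hb, rfl⟩
    rcases x with i | ⟨i, u⟩ <;> rcases y with j | ⟨j, v⟩
    · -- inl i, inl j
      have hij : i ≠ j := fun h => hxy (congrArg Sum.inl h)
      obtain ⟨b, hb⟩ := hBne
      refine ⟨Sum.inr (i, b), hmemW i b hb, Or.inl ⟨?_, ?_⟩⟩
      · rw [corona_adj_inr_inl]
      · rw [corona_adj_inr_inl]; exact hij
    · -- inl i, inr (j, v)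
      have hv : v ∉ B := fun h => hy ⟨(j, v), h, rfl⟩
      by_cases hij : i = j
      · subst hij
        obtain ⟨b, hbB, hbn⟩ := hHnon v
        refine ⟨Sum.inr (i, b), hmemW i b hbB, Or.inl ⟨?_, ?_⟩⟩
        · rw [corona_adj_inr_inl]
        · rw [corona_adj_inr_inr]; exact fun hc => hbn hc.2
      · obtain ⟨b, hb⟩ := hBne
        refine ⟨Sum.inr (i, b), hmemW i b hb, Or.inl ⟨?_, ?_⟩⟩
        · rw [corona_adj_inr_inl]
        · rw [corona_adj_inr_inr]; exact fun hc => hij hc.1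
    · -- inr (i, u), inl j
      have hu : u ∉ B := fun h => hx ⟨(i, u), h, rfl⟩
      by_cases hij : j = i
      · subst hij
        obtain ⟨b, hbB, hbn⟩ := hHnon u
        refine ⟨Sum.inr (j, b), hmemW j b hbB, Or.inr ⟨?_, ?_⟩⟩
        · rw [corona_adj_inr_inl]
        · rw [corona_adj_inr_inr]; exact fun hc => hbn hc.2
      · obtain ⟨b, hb⟩ := hBne
        refine ⟨Sum.inr (j, b), hmemW j b hb, Or.inr ⟨?_, ?_⟩⟩
        · rw [corona_adj_inr_inl]
        · rw [corona_adj_inr_inr]; exact fun hc => hij hc.1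
    · -- inr (i, u), inr (j, v)
      have hu : u ∉ B := fun h => hx ⟨(i, u), h, rfl⟩
      have hv : v ∉ B := fun h => hy ⟨(j, v), h, rfl⟩
      by_cases hij : i = j
      · subst hij
        have huv : u ≠ v := by
          intro h; exact hxy (by rw [h])
        obtain ⟨b, hbB, hxor⟩ := hHgen u v hu hv huv
        refine ⟨Sum.inr (i, b), hmemW i b hbB, ?_⟩
        rcases hxor with ⟨h1, h2⟩ | ⟨h1, h2⟩
        · exact Or.inl ⟨corona_adj_inr_inr.mpr ⟨rfl, h1⟩, fun hc => h2 (corona_adj_inr_inr.mp hc).2⟩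
        · exact Or.inr ⟨corona_adj_inr_inr.mpr ⟨rfl, h1⟩, fun hc => h2 (corona_adj_inr_inr.mp hc).2⟩
      · obtain ⟨b, hbB, hba⟩ := hHdom u hu
        refine ⟨Sum.inr (i, b), hmemW i b hbB, Or.inl ⟨?_, ?_⟩⟩
        · exact corona_adj_inr_inr.mpr ⟨rfl, hba⟩
        · rw [corona_adj_inr_inr]; exact fun hc => hij hc.1
  -- conclude
  apply le_antisymm
  · apply Nat.sInf_le
    exact ⟨W, hWcard, hWgen⟩
  · refine le_csInf ⟨_, W, rfl, hWgen⟩ ?_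
    rintro k ⟨S, rfl, hS⟩
    obtain ⟨G₀, hG₀⟩ := h𝒢ne
    have hH₀ : ∃ H₀ ∈ ℋ, adjDim H₀ = m := by
      rcases hmem with h | h
      · exact ⟨_, h, hdimP⟩
      · exact ⟨_, h, hdimC⟩
    obtain ⟨H₀, hH₀mem, hH₀dim⟩ := hH₀
    have hK := hS (corona G₀ H₀) ⟨G₀, hG₀, H₀, hH₀mem, rfl⟩
    have hfib : ∀ i : V,
        m ≤ (Finset.univ.filter (fun w : Fin n => Sum.inr (i, w) ∈ S)).card := by
      intro i
      set Fi : Finset (Fin n) := Finset.univ.filter (fun w => Sum.inr (i, w) ∈ S) with hFi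
      have hgen : IsAdjGen H₀ (↑Fi : Set (Fin n)) := by
        intro x y hx hy hxy
        have hx' : (Sum.inr (i, x) : V ⊕ V × Fin n) ∉ S := by
          intro hc; exact hx (by simp [hFi, hc])
        have hy' : (Sum.inr (i, y) : V ⊕ V × Fin n) ∉ S := by
          intro hc; exact hy (by simp [hFi, hc])
        have hne : (Sum.inr (i, x) : V ⊕ V × Fin n) ≠ Sum.inr (i, y) := by
          intro h
          exact hxy (congrArg Prod.snd (Sum.inr_injective h))
        obtain ⟨s, hsS, hxor⟩ := hK _ _ hx' hy' hne
        rcases s with j | ⟨j, w⟩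
        · exfalso
          rw [corona_adj_inl_inr, corona_adj_inl_inr] at hxor
          rcases hxor with ⟨h1, h2⟩ | ⟨h1, h2⟩ <;> exact h2 h1
        · by_cases hji : j = i
          · subst hji
            refine ⟨w, by simp [hFi, hsS], ?_⟩
            rw [corona_adj_inr_inr, corona_adj_inr_inr] at hxor
            rcases hxor with ⟨h1, h2⟩ | ⟨h1, h2⟩
            · exact Or.inl ⟨h1.2, fun hc => h2 ⟨rfl, hc⟩⟩
            · exact Or.inr ⟨h1.2, fun hc => h2 ⟨rfl, hc⟩⟩
          · exfalso
            rw [corona_adj_inr_inr, corona_adj_inr_inr] at hxor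
            rcases hxor with ⟨h1, _⟩ | ⟨h1, _⟩ <;> exact hji h1.1
      have hsim : IsSimAdjGen {H₀} (↑Fi : Set (Fin n)) := by
        intro H hH
        rw [Set.mem_singleton_iff] at hH
        subst hH
        exact hgen
      have hle : adjDim H₀ ≤ (↑Fi : Set (Fin n)).ncard :=
        Nat.sInf_le ⟨(↑Fi : Set (Fin n)), rfl, hsim⟩
      rw [hH₀dim, Set.ncard_coe_finset] at hle
      exact hle
    calc Fintype.card V * m
        = ∑ _i ∈ (Finset.univ : Finset V), m := by
          rw [Finset.sum_const, smul_eq_mul, Finset.card_univ]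
      _ ≤ ∑ i ∈ (Finset.univ : Finset V),
            (Finset.univ.filter (fun w : Fin n => Sum.inr (i, w) ∈ S)).card :=
          Finset.sum_le_sum (fun i _ => hfib i)
      _ ≤ S.ncard := aux_fiber_sum_le S
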